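/- arXiv:2308.11904 — 5 statements merged into one kernel-verified Lean document; each statement's English description precedes it below -/
import Mathlib

section
/- Let A be an n×n real symmetric positive semidefinite matrix, B an n×n real symmetric positive definite matrix, let y ∈ ℝⁿ be nonzero with y_i = 0 for some index i, and define R̃(α) = R(y + α e_i) for α ∈ ℝ. Then R̃ is differentiable at every α ∈ ℝ and its derivative equals R̃'(α) = 2·(q₁₂ α² + q₁₃ α + q₂₃) / (B_{ii}α² + 2(By)_i α + yᵀBy)², where q₁₂ = A_{ii}(By)_i − B_{ii}(Ay)_i, q₁₃ = A_{ii}(yᵀBy) − B_{ii}(yᵀAy), and q₂₃ = (Ay)_i(yᵀBy) − (By)_i(yᵀAy). -/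
open Matrix

lemma quad_expand {n : ℕ} (M : Matrix (Fin n) (Fin n) ℝ) (hM : M.IsHermitian)
    (y : Fin n → ℝ) (i : Fin n) (β : ℝ) :
    (y + β • (Pi.single i 1 : Fin n → ℝ)) ⬝ᵥ
        M.mulVec (y + β • (Pi.single i 1 : Fin n → ℝ)) =
      M i i * β ^ 2 + 2 * M.mulVec y i * β + y ⬝ᵥ M.mulVec y := by
  have hsym : ∀ j, M j i = M i j := fun j => by
    have := hM.apply i j
    simpa using this
  have h1 : y ⬝ᵥ M.mulVec (Pi.single i 1) = M.mulVec y i := by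
    simp only [dotProduct, mulVec, Pi.single_apply, mul_ite, mul_one, mul_zero,
      Finset.sum_ite_eq', Finset.mem_univ, if_true]
    exact Finset.sum_congr rfl fun j _ => by rw [hsym j]; ring
  simp only [mulVec_add, mulVec_smul, dotProduct_add, add_dotProduct,
    smul_dotProduct, dotProduct_smul, smul_eq_mul]
  have h2 : (Pi.single i 1 : Fin n → ℝ) ⬝ᵥ M.mulVec y = M.mulVec y i := by
    simp [single_dotProduct]
  have h3 : (Pi.single i 1 : Fin n → ℝ) ⬝ᵥ M.mulVec (Pi.single i 1) = M i i := by
    simp [mulVec_single, single_dotProduct]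
  rw [h1, h2, h3]
  ring

/-- The univariate function `R̃(α) = R(y + α e_i)` is differentiable everywhere, with
derivative `2(q₁₂α² + q₁₃α + q₂₃)/(B_{ii}α² + 2(By)_i α + yᵀBy)²`. -/
theorem rayleigh_hasDerivAt {n : ℕ} (A B : Matrix (Fin n) (Fin n) ℝ)
    (hA : A.PosSemidef) (hB : B.PosDef) (y : Fin n → ℝ) (hy : y ≠ 0)
    (i : Fin n) (hyi : y i = 0) :
    ∀ α : ℝ,
      HasDerivAt (fun β : ℝ =>
          ((y + β • (Pi.single i 1 : Fin n → ℝ)) ⬝ᵥ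
              A.mulVec (y + β • (Pi.single i 1 : Fin n → ℝ))) /
            ((y + β • (Pi.single i 1 : Fin n → ℝ)) ⬝ᵥ
              B.mulVec (y + β • (Pi.single i 1 : Fin n → ℝ))))
        (2 * ((A i i * B.mulVec y i - B i i * A.mulVec y i) * α ^ 2
            + (A i i * (y ⬝ᵥ B.mulVec y) - B i i * (y ⬝ᵥ A.mulVec y)) * α
            + (A.mulVec y i * (y ⬝ᵥ B.mulVec y) - B.mulVec y i * (y ⬝ᵥ A.mulVec y))) /
          (B i i * α ^ 2 + 2 * B.mulVec y i * α + y ⬝ᵥ B.mulVec y) ^ 2)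
        α := by
  intro α
  have hfun : (fun β : ℝ =>
        ((y + β • (Pi.single i 1 : Fin n → ℝ)) ⬝ᵥ
            A.mulVec (y + β • (Pi.single i 1 : Fin n → ℝ))) /
          ((y + β • (Pi.single i 1 : Fin n → ℝ)) ⬝ᵥ
            B.mulVec (y + β • (Pi.single i 1 : Fin n → ℝ)))) =
      fun β : ℝ =>
        (A i i * β ^ 2 + 2 * A.mulVec y i * β + y ⬝ᵥ A.mulVec y) /
          (B i i * β ^ 2 + 2 * B.mulVec y i * β + y ⬝ᵥ B.mulVec y) := by
    funext β
    rw [quad_expand A hA.1 y i β, quad_expand B hB.1 y i β]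
  rw [hfun]
  -- denominator positive
  have hv : y + α • (Pi.single i 1 : Fin n → ℝ) ≠ 0 := by
    intro h
    apply hy
    have hi := congrFun h i
    simp [hyi] at hi
    funext j
    have := congrFun h j
    simpa [hi] using this
  have hpos : 0 < B i i * α ^ 2 + 2 * B.mulVec y i * α + y ⬝ᵥ B.mulVec y := by
    have := hB.dotProduct_mulVec_pos hv
    rw [← quad_expand B hB.1 y i α]
    simpa [dotProduct] using this
  have hne : B i i * α ^ 2 + 2 * B.mulVec y i * α + y ⬝ᵥ B.mulVec y ≠ 0 := ne_of_gt hpos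
  have hf : HasDerivAt (fun β : ℝ => A i i * β ^ 2 + 2 * A.mulVec y i * β + y ⬝ᵥ A.mulVec y)
      (A i i * (2 * α) + 2 * A.mulVec y i) α := by
    have := (((hasDerivAt_pow 2 α).const_mul (A i i)).add
      ((hasDerivAt_id α).const_mul (2 * A.mulVec y i))).add_const (y ⬝ᵥ A.mulVec y)
    simpa using this
  have hg : HasDerivAt (fun β : ℝ => B i i * β ^ 2 + 2 * B.mulVec y i * β + y ⬝ᵥ B.mulVec y)
      (B i i * (2 * α) + 2 * B.mulVec y i) α := by
    have := (((hasDerivAt_pow 2 α).const_mul (B i i)).add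
      ((hasDerivAt_id α).const_mul (2 * B.mulVec y i))).add_const (y ⬝ᵥ B.mulVec y)
    simpa using this
  have := hf.div hg hne
  refine this.congr_deriv ?_
  field_simp
  ring
end

section
/- Let A be an n×n real symmetric positive semidefinite matrix, B an n×n real symmetric positive definite matrix, let y ∈ ℝⁿ be nonzero with y_i = 0 for some index i, and define R̃(α) = R(y + α e_i), q₁₂ = A_{ii}(By)_i − B_{ii}(Ay)_i, and q₁₃ = A_{ii}(yᵀBy) − B_{ii}(yᵀAy). If q₁₂ = 0 and q₁₃ > 0, then R̃(α) < A_{ii}/B_{ii} for every α ∈ ℝ, and the supremum of R̃ over ℝ equals A_{ii}/B_{ii} (so the supremum is not attained). -/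
open Matrix Filter

private lemma rq_expand {n : ℕ} (M : Matrix (Fin n) (Fin n) ℝ) (hM : M.IsHermitian)
    (y : Fin n → ℝ) (i : Fin n) (α : ℝ) :
    (y + α • (Pi.single i 1 : Fin n → ℝ)) ⬝ᵥ M.mulVec (y + α • (Pi.single i 1 : Fin n → ℝ))
      = y ⬝ᵥ M.mulVec y + 2*α*(M.mulVec y i) + α^2 * M i i := by
  have hsym : Mᵀ = M := hM
  have h1 : (Pi.single i 1 : Fin n → ℝ) ⬝ᵥ M.mulVec y = M.mulVec y i := by
    simp [dotProduct, Pi.single_apply]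
  have h2 : y ⬝ᵥ M.mulVec (Pi.single i 1 : Fin n → ℝ) = M.mulVec y i := by
    rw [dotProduct_mulVec, ← mulVec_transpose, hsym]
    simp [dotProduct, Pi.single_apply]
  have h3 : (Pi.single i 1 : Fin n → ℝ) ⬝ᵥ M.mulVec (Pi.single i 1 : Fin n → ℝ) = M i i := by
    simp [dotProduct, mulVec, Pi.single_apply]
  simp only [mulVec_add, mulVec_smul, dotProduct_add, add_dotProduct, dotProduct_smul,
    smul_dotProduct, smul_eq_mul, h1, h2, h3]
  ring

/-- If `q₁₂ = 0` and `q₁₃ > 0`, then `R̃(α) < A_{ii}/B_{ii}` for every `α`, and the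
supremum of `R̃` over ℝ is `A_{ii}/B_{ii}` (hence unattained). -/
theorem rayleigh_sup_of_q12_zero_q13_pos {n : ℕ} (A B : Matrix (Fin n) (Fin n) ℝ)
    (hA : A.PosSemidef) (hB : B.PosDef) (y : Fin n → ℝ) (hy : y ≠ 0)
    (i : Fin n) (hyi : y i = 0)
    (hq12 : A i i * B.mulVec y i - B i i * A.mulVec y i = 0)
    (hq13 : 0 < A i i * (y ⬝ᵥ B.mulVec y) - B i i * (y ⬝ᵥ A.mulVec y)) :
    (∀ α : ℝ,
      ((y + α • (Pi.single i 1 : Fin n → ℝ)) ⬝ᵥ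
          A.mulVec (y + α • (Pi.single i 1 : Fin n → ℝ))) /
        ((y + α • (Pi.single i 1 : Fin n → ℝ)) ⬝ᵥ
          B.mulVec (y + α • (Pi.single i 1 : Fin n → ℝ)))
      < A i i / B i i) ∧
    IsLUB (Set.range fun α : ℝ =>
        ((y + α • (Pi.single i 1 : Fin n → ℝ)) ⬝ᵥ
            A.mulVec (y + α • (Pi.single i 1 : Fin n → ℝ))) /
          ((y + α • (Pi.single i 1 : Fin n → ℝ)) ⬝ᵥ
            B.mulVec (y + α • (Pi.single i 1 : Fin n → ℝ))))
      (A i i / B i i) := by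
  set a0 := y ⬝ᵥ A.mulVec y with ha0
  set a1 := A.mulVec y i with ha1
  set a2 := A i i with ha2
  set b0 := y ⬝ᵥ B.mulVec y with hb0
  set b1 := B.mulVec y i with hb1
  set b2 := B i i with hb2
  have EA := rq_expand A hA.1 y i
  have EB := rq_expand B hB.1 y i
  -- positivity of B i i
  have hb2pos : 0 < b2 := by
    have hne : (Pi.single i 1 : Fin n → ℝ) ≠ 0 := by
      intro h
      have := congrFun h i
      simp at this
    have := hB.dotProduct_mulVec_pos hne
    have h3 : (Pi.single i 1 : Fin n → ℝ) ⬝ᵥ B.mulVec (Pi.single i 1 : Fin n → ℝ) = B i i := by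
      simp [dotProduct, mulVec, Pi.single_apply]
    simpa [h3] using this
  -- positivity of the denominator for every α
  have hDpos : ∀ α : ℝ, 0 < b0 + 2*α*b1 + α^2*b2 := by
    intro α
    obtain ⟨j, hj⟩ := Function.ne_iff.mp hy
    have hji : j ≠ i := by rintro rfl; exact hj hyi
    have hxne : (y + α • (Pi.single i 1 : Fin n → ℝ)) ≠ 0 := by
      intro h
      have := congrFun h j
      simp [Pi.single_apply, hji] at this
      exact hj this
    have := hB.dotProduct_mulVec_pos hxne
    rw [show star (y + α • (Pi.single i 1 : Fin n → ℝ)) = y + α • (Pi.single i 1 : Fin n → ℝ)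
      from star_trivial _] at this
    rwa [EB α] at this
  -- strict bound
  have hstrict : ∀ α : ℝ, (a0 + 2*α*a1 + α^2*a2) / (b0 + 2*α*b1 + α^2*b2) < a2 / b2 := by
    intro α
    rw [div_lt_div_iff₀ (hDpos α) hb2pos]
    have key : (a0 + 2*α*a1 + α^2*a2) * b2
        = a2*(b0 + 2*α*b1 + α^2*b2) - (a2*b0 - b2*a0) := by
      linear_combination (-2*α) * hq12
    rw [key]
    linarith
  -- tendsto
  have hg : Tendsto (fun α : ℝ => (a0 + 2*α*a1 + α^2*a2) / (b0 + 2*α*b1 + α^2*b2))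
      atTop (nhds (a2 / b2)) := by
    have t0 : Tendsto (fun α : ℝ => α⁻¹) atTop (nhds 0) := tendsto_inv_atTop_zero
    have tnum : Tendsto (fun α : ℝ => a2 + 2*α⁻¹*a1 + (α⁻¹)^2*a0) atTop
        (nhds (a2 + 2*(0:ℝ)*a1 + (0:ℝ)^2*a0)) := by
      exact (tendsto_const_nhds.add (((t0.const_mul 2)).mul_const a1)).add
        ((t0.pow 2).mul_const a0)
    have tden : Tendsto (fun α : ℝ => b2 + 2*α⁻¹*b1 + (α⁻¹)^2*b0) atTop
        (nhds (b2 + 2*(0:ℝ)*b1 + (0:ℝ)^2*b0)) := by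
      exact (tendsto_const_nhds.add (((t0.const_mul 2)).mul_const b1)).add
        ((t0.pow 2).mul_const b0)
    simp only [mul_zero, zero_mul, add_zero, ne_eq, zero_pow, zero_mul] at tnum tden
    norm_num at tnum tden
    have tq := tnum.div tden (ne_of_gt hb2pos)
    refine tq.congr' ?_
    filter_upwards [eventually_gt_atTop (0:ℝ)] with α hα
    have hαne : (α:ℝ)^2 ≠ 0 := pow_ne_zero 2 (ne_of_gt hα)
    have hnum : a2 + 2*α⁻¹*a1 + (α^2)⁻¹*a0 = (α^2)⁻¹ * (a0 + 2*α*a1 + α^2*a2) := by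
      field_simp; ring
    have hden : b2 + 2*α⁻¹*b1 + (α^2)⁻¹*b0 = (α^2)⁻¹ * (b0 + 2*α*b1 + α^2*b2) := by
      field_simp; ring
    simp only [Pi.div_apply]
    rw [hnum, hden, mul_div_mul_left _ _ (inv_ne_zero hαne)]
  refine ⟨fun α => by simp only [EA, EB]; exact hstrict α, ?_⟩
  constructor
  · rintro x ⟨α, rfl⟩
    simp only [EA, EB]
    exact (hstrict α).le
  · intro c hc
    by_contra hlt
    push_neg at hlt
    obtain ⟨α, hα⟩ := (hg.eventually (eventually_gt_nhds hlt)).exists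
    have : (a0 + 2*α*a1 + α^2*a2) / (b0 + 2*α*b1 + α^2*b2) ≤ c := by
      have hm := hc ⟨α, rfl⟩
      simp only [EA, EB] at hm
      exact hm
    linarith
end

section
/- Let A be an n×n real symmetric positive semidefinite matrix, B an n×n real symmetric positive definite matrix, let y ∈ ℝⁿ be nonzero with y_i = 0 for some index i, and define q₁₂ = A_{ii}(By)_i − B_{ii}(Ay)_i, q₁₃ = A_{ii}(yᵀBy) − B_{ii}(yᵀAy), and q₂₃ = (Ay)_i(yᵀBy) − (By)_i(yᵀAy). If q₁₂ ≠ 0, then the discriminant q₁₃² − 4·q₁₂·q₂₃ of the quadratic q₁₂α² + q₁₃α + q₂₃ is strictly positive. -/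
open Matrix

/-- If `q₁₂ ≠ 0`, the discriminant `q₁₃² − 4 q₁₂ q₂₃` is strictly positive. -/
theorem rayleigh_discriminant_pos {n : ℕ} (A B : Matrix (Fin n) (Fin n) ℝ)
    (hA : A.PosSemidef) (hB : B.PosDef) (y : Fin n → ℝ) (hy : y ≠ 0)
    (i : Fin n) (hyi : y i = 0)
    (hq12 : A i i * B.mulVec y i - B i i * A.mulVec y i ≠ 0) :
    0 < (A i i * (y ⬝ᵥ B.mulVec y) - B i i * (y ⬝ᵥ A.mulVec y)) ^ 2
        - 4 * (A i i * B.mulVec y i - B i i * A.mulVec y i)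
            * (A.mulVec y i * (y ⬝ᵥ B.mulVec y) - B.mulVec y i * (y ⬝ᵥ A.mulVec y)) := by
  set b := B i i with hb
  set q := B.mulVec y i with hq
  set t := y ⬝ᵥ B.mulVec y with ht
  -- b > 0
  have hbpos : 0 < b := by
    have := hB.dotProduct_mulVec_pos (x := Pi.single i 1) (by simp [Function.ne_iff])
    simpa [single_dotProduct, mulVec_single] using this
  -- symmetry: y ⬝ᵥ B *ᵥ e_i = q
  have hsym : y ⬝ᵥ B.mulVec (Pi.single i 1) = q := by
    have h1 : y ⬝ᵥ B.mulVec (Pi.single i 1) = ∑ j, y j * B j i := by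
      simp [mulVec_single, dotProduct]
    have h2 : q = ∑ j, B i j * y j := by
      simp [hq, mulVec, dotProduct]
    rw [h1, h2]
    refine Finset.sum_congr rfl fun j _ => ?_
    have := congrFun (congrFun hB.1 j) i
    simp [conjTranspose_apply] at this
    rw [← this]; ring
  -- strict Cauchy-Schwarz: q^2 < b * t
  have hcs : q ^ 2 < b * t := by
    set z : Fin n → ℝ := b • y - q • (Pi.single i 1 : Fin n → ℝ) with hz
    have hzne : z ≠ 0 := by
      by_cases hq0 : q = 0
      · simp only [hz, hq0, zero_smul, sub_zero]
        exact smul_ne_zero hbpos.ne' hy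
      · intro h
        have := congrFun h i
        simp [hz, hyi, hq0] at this
    have hpos := hB.dotProduct_mulVec_pos hzne
    simp only [star_trivial] at hpos
    have hzz : z ⬝ᵥ B.mulVec z = b * (b * t - q ^ 2) := by
      simp only [hz, mulVec_sub, mulVec_smul, dotProduct_sub, sub_dotProduct,
        dotProduct_smul, smul_dotProduct, smul_eq_mul]
      rw [hsym]
      simp [single_dotProduct, mulVec_single, ← hq, ← ht, ← hb]
      ring
    rw [hzz] at hpos
    nlinarith [hpos, hbpos]
  -- main inequality via ring identity
  have hq12sq : 0 < (A i i * q - b * A.mulVec y i) ^ 2 := by positivity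
  nlinarith [sq_nonneg (b * (A i i * t - b * (y ⬝ᵥ A.mulVec y)) - 2 * q * (A i i * q - b * A.mulVec y i)),
    mul_pos hq12sq (sub_pos.mpr hcs), mul_pos hbpos hbpos]
end

section
/- Let A be an n×n real symmetric positive semidefinite matrix, B an n×n real symmetric positive definite matrix, let y ∈ ℝⁿ be nonzero with y_i = 0 for some index i, and define R̃(α) = R(y + α e_i), q₁₂ = A_{ii}(By)_i − B_{ii}(Ay)_i, q₁₃ = A_{ii}(yᵀBy) − B_{ii}(yᵀAy), and q₂₃ = (Ay)_i(yᵀBy) − (By)_i(yᵀAy). If q₁₂ ≠ 0, then α⁻ := (−q₁₃ − √(q₁₃² − 4·q₁₂·q₂₃)) / (2·q₁₂) is a global maximizer of R̃ over ℝ: R̃(α) ≤ R̃(α⁻) for every α ∈ ℝ. -/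
open Matrix

private lemma dnonneg_aux (a b p q s t : ℝ) (ht : 0 < t) (hCS : q^2 ≤ t*b) :
    0 ≤ (a*t - b*s)^2 - 4*(a*q - b*p)*(p*t - q*s) := by
  have hid : ((a*t - b*s)^2 - 4*(a*q - b*p)*(p*t - q*s)) * t^2 =
      (t*(b*s - t*a) - 2*q*(q*s - p*t))^2 + (t*b - q^2)*(2*(q*s - p*t))^2 := by ring
  nlinarith [hid, sq_nonneg (t*(b*s - t*a) - 2*q*(q*s - p*t)),
    mul_nonneg (sub_nonneg.2 hCS) (sq_nonneg (2*(q*s - p*t))), pow_pos ht 2]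

private lemma ratio_aux (a b p q s t q12 q13 q23 r α β : ℝ)
    (hq12 : q12 = a*q - b*p) (hq13 : q13 = a*t - b*s) (hq23 : q23 = p*t - q*s)
    (h12 : q12 ≠ 0) (hr : 0 ≤ r) (hr2 : r^2 = q13^2 - 4*q12*q23)
    (hβ : β = (-q13 - r)/(2*q12))
    (hDα : 0 < t + 2*α*q + α^2*b) (hDβ : 0 < t + 2*β*q + β^2*b) :
    (s + 2*α*p + α^2*a) / (t + 2*α*q + α^2*b) ≤
      (s + 2*β*p + β^2*a) / (t + 2*β*q + β^2*b) := by
  have h2 : (2:ℝ)*q12 ≠ 0 := by simpa using h12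
  have hβ' : 2*q12*β + q13 = -r := by
    rw [hβ]; field_simp; ring
  have hsq : (2*q12*β + q13)^2 = q13^2 - 4*q12*q23 := by
    rw [hβ', neg_sq, hr2]
  have h4 : (4*q12)*(q12*β^2 + q13*β + q23) = 0 := by linear_combination hsq
  have h4' : (4:ℝ)*q12 ≠ 0 := by simpa using h12
  have hroot : q12*β^2 + q13*β + q23 = 0 := (mul_eq_zero.1 h4).resolve_left h4'
  rw [div_le_div_iff₀ hDα hDβ]
  have hkey : (s + 2*α*p + α^2*a)*(t + 2*β*q + β^2*b) -
      (s + 2*β*p + β^2*a)*(t + 2*α*q + α^2*b)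
      = (α-β)^2*(2*q12*β + q13) + 2*(α-β)*(q12*β^2 + q13*β + q23) := by
    rw [hq12, hq13, hq23]; ring
  rw [hβ', hroot] at hkey
  nlinarith [hkey, mul_nonneg (sq_nonneg (α-β)) hr]

/-- If `q₁₂ ≠ 0`, then `α⁻ = (−q₁₃ − √(q₁₃² − 4 q₁₂ q₂₃))/(2 q₁₂)` is a global maximizer
of `R̃(α) = R(y + α e_i)` over ℝ. -/
theorem rayleigh_max_at_alpha_minus {n : ℕ} (A B : Matrix (Fin n) (Fin n) ℝ)
    (hA : A.PosSemidef) (hB : B.PosDef) (y : Fin n → ℝ) (hy : y ≠ 0)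
    (i : Fin n) (hyi : y i = 0)
    (hq12 : A i i * B.mulVec y i - B i i * A.mulVec y i ≠ 0) :
    ∀ α : ℝ,
      ((y + α • (Pi.single i 1 : Fin n → ℝ)) ⬝ᵥ
          A.mulVec (y + α • (Pi.single i 1 : Fin n → ℝ))) /
        ((y + α • (Pi.single i 1 : Fin n → ℝ)) ⬝ᵥ
          B.mulVec (y + α • (Pi.single i 1 : Fin n → ℝ)))
      ≤ (letI q12 := A i i * B.mulVec y i - B i i * A.mulVec y i
         letI q13 := A i i * (y ⬝ᵥ B.mulVec y) - B i i * (y ⬝ᵥ A.mulVec y)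
         letI q23 := A.mulVec y i * (y ⬝ᵥ B.mulVec y) - B.mulVec y i * (y ⬝ᵥ A.mulVec y)
         letI αm := (-q13 - Real.sqrt (q13 ^ 2 - 4 * q12 * q23)) / (2 * q12)
         ((y + αm • (Pi.single i 1 : Fin n → ℝ)) ⬝ᵥ
             A.mulVec (y + αm • (Pi.single i 1 : Fin n → ℝ))) /
           ((y + αm • (Pi.single i 1 : Fin n → ℝ)) ⬝ᵥ
             B.mulVec (y + αm • (Pi.single i 1 : Fin n → ℝ)))) := by
  intro α
  have hAs : Aᵀ = A := by simpa using hA.1.eq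
  have hBs : Bᵀ = B := by simpa using hB.1.eq
  obtain ⟨j, hj⟩ := Function.ne_iff.1 hy
  have hji : j ≠ i := fun h => hj (by rw [h, hyi]; rfl)
  have hne : ∀ β : ℝ, y + β • (Pi.single i 1 : Fin n → ℝ) ≠ 0 := by
    intro β h
    apply hj
    have := congrFun h j
    simpa [Pi.single_apply, hji] using this
  have hD : ∀ β : ℝ, 0 < (y + β • (Pi.single i 1 : Fin n → ℝ)) ⬝ᵥ
      B.mulVec (y + β • (Pi.single i 1 : Fin n → ℝ)) := fun β => by
    simpa using hB.dotProduct_mulVec_pos (hne β)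
  have expand : ∀ (M : Matrix (Fin n) (Fin n) ℝ), Mᵀ = M → ∀ β : ℝ,
      (y + β • (Pi.single i 1 : Fin n → ℝ)) ⬝ᵥ
        M.mulVec (y + β • (Pi.single i 1 : Fin n → ℝ)) =
      y ⬝ᵥ M.mulVec y + 2*β*(M.mulVec y i) + β^2 * (M i i) := by
    intro M hsym β
    have h1 : (Pi.single i 1 : Fin n → ℝ) ⬝ᵥ M.mulVec y = M.mulVec y i := by
      simp [single_dotProduct]
    have h2 : y ⬝ᵥ M.mulVec (Pi.single i 1 : Fin n → ℝ) = M.mulVec y i := by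
      rw [Matrix.dotProduct_mulVec, ← Matrix.mulVec_transpose, hsym]
      simp [dotProduct_single]
    have h3 : (Pi.single i 1 : Fin n → ℝ) ⬝ᵥ M.mulVec (Pi.single i 1 : Fin n → ℝ) = M i i := by
      simp [Matrix.mulVec_single, single_dotProduct]
    simp only [Matrix.mulVec_add, Matrix.mulVec_smul, add_dotProduct,
      dotProduct_add, smul_dotProduct, dotProduct_smul, smul_eq_mul,
      h1, h2, h3]
    ring
  have ht : 0 < y ⬝ᵥ B.mulVec y := by simpa using hB.dotProduct_mulVec_pos hy
  -- Cauchy–Schwarz for B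
  have hq : ∀ x : ℝ, 0 ≤ (B i i) * (x*x) + (2*(B.mulVec y i))*x + (y ⬝ᵥ B.mulVec y) := by
    intro x
    have := hD x
    rw [expand B hBs x] at this
    nlinarith [this]
  have hCS : (B.mulVec y i)^2 ≤ (y ⬝ᵥ B.mulVec y) * (B i i) := by
    have := discrim_le_zero hq
    rw [discrim] at this
    nlinarith [this]
  have hd : 0 ≤ (A i i * (y ⬝ᵥ B.mulVec y) - B i i * (y ⬝ᵥ A.mulVec y))^2 -
      4*(A i i * B.mulVec y i - B i i * A.mulVec y i) *
        (A.mulVec y i * (y ⬝ᵥ B.mulVec y) - B.mulVec y i * (y ⬝ᵥ A.mulVec y)) :=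
    dnonneg_aux (A i i) (B i i) (A.mulVec y i) (B.mulVec y i)
      (y ⬝ᵥ A.mulVec y) (y ⬝ᵥ B.mulVec y) ht hCS
  set q12 : ℝ := A i i * B.mulVec y i - B i i * A.mulVec y i with hq12'
  set q13 : ℝ := A i i * (y ⬝ᵥ B.mulVec y) - B i i * (y ⬝ᵥ A.mulVec y) with hq13'
  set q23 : ℝ := A.mulVec y i * (y ⬝ᵥ B.mulVec y) - B.mulVec y i * (y ⬝ᵥ A.mulVec y) with hq23'
  set αm : ℝ := (-q13 - Real.sqrt (q13 ^ 2 - 4 * q12 * q23)) / (2 * q12) with hαm'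
  have hd' : 0 ≤ q13^2 - 4*q12*q23 := by
    rw [hq12', hq13', hq23']
    convert hd using 2 <;> ring
  have hDα := hD α
  have hDβ := hD αm
  rw [expand B hBs α] at hDα
  rw [expand B hBs αm] at hDβ
  have hfinal := ratio_aux (A i i) (B i i) (A.mulVec y i) (B.mulVec y i)
    (y ⬝ᵥ A.mulVec y) (y ⬝ᵥ B.mulVec y) q12 q13 q23
    (Real.sqrt (q13^2 - 4*q12*q23)) α αm
    hq12' hq13' hq23'
    hq12
    (Real.sqrt_nonneg _) (Real.sq_sqrt hd')
    hαm'
    (by linarith [hDα]) (by linarith [hDβ])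
  show _ ≤ ((y + αm • (Pi.single i 1 : Fin n → ℝ)) ⬝ᵥ
             A.mulVec (y + αm • (Pi.single i 1 : Fin n → ℝ))) /
           ((y + αm • (Pi.single i 1 : Fin n → ℝ)) ⬝ᵥ
             B.mulVec (y + αm • (Pi.single i 1 : Fin n → ℝ)))
  rw [expand A hAs α, expand B hBs α, expand A hAs αm, expand B hBs αm]
  convert hfinal using 2 <;> ring
end

section
/- Let x, x' ∈ ℝⁿ and let s be a positive integer. Suppose ‖x‖₀ = s, ‖x'‖₀ ≤ s, and supp(x') ≠ supp(x). Then ‖x' − x‖₂ ≥ min_{j ∈ supp(x)} |x_j| > 0, where ‖·‖₂ denotes the Euclidean norm. -/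
lemma abs_coord_le_norm {n : ℕ} (y : EuclideanSpace ℝ (Fin n)) (j : Fin n) :
    |y j| ≤ ‖y‖ := by
  rw [EuclideanSpace.norm_eq]
  have h1 : |y j| = Real.sqrt (‖y j‖ ^ 2) := by
    rw [Real.sqrt_sq_eq_abs, abs_norm, Real.norm_eq_abs]
  rw [h1]
  apply Real.sqrt_le_sqrt
  exact Finset.single_le_sum (f := fun i => ‖y i‖ ^ 2)
    (fun i _ => by positivity) (Finset.mem_univ j)

/-- If `‖x‖₀ = s`, `‖x'‖₀ ≤ s`, and `supp(x') ≠ supp(x)`, then the Euclidean distance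
between `x'` and `x` is at least `min_{j ∈ supp(x)} |x_j|`, which is positive. -/
theorem dist_ge_min_abs_of_support_ne {n : ℕ} (s : ℕ) (hs : 1 ≤ s)
    (x x' : EuclideanSpace ℝ (Fin n))
    (hx : (Function.support x).ncard = s)
    (hx' : (Function.support x').ncard ≤ s)
    (hsupp : Function.support x' ≠ Function.support x) :
    sInf ((fun j => |x j|) '' Function.support x) ≤ ‖x' - x‖ ∧
    0 < sInf ((fun j => |x j|) '' Function.support x) := by
  have hfin : (Function.support x).Finite := Set.toFinite _
  have hfin' : (Function.support x').Finite := Set.toFinite _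
  have hne : (Function.support x).Nonempty := by
    rw [Set.nonempty_iff_ne_empty]
    intro h
    rw [h] at hx
    simp at hx
    omega
  -- there exists j in supp x \ supp x'
  have hj : ∃ j, j ∈ Function.support x ∧ j ∉ Function.support x' := by
    by_contra h
    push_neg at h
    have hsub : Function.support x ⊆ Function.support x' := fun j hj => h j hj
    have := Set.eq_of_subset_of_ncard_le hsub (by omega) hfin'
    exact hsupp this.symm
  obtain ⟨j, hjx, hjx'⟩ := hj
  have himfin : ((fun j => |x j|) '' Function.support x).Finite := hfin.image _
  have himne : ((fun j => |x j|) '' Function.support x).Nonempty := hne.image _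
  have hbdd : BddBelow ((fun j => |x j|) '' Function.support x) := himfin.bddBelow
  have hmem := himne.csInf_mem himfin
  obtain ⟨i, hi, hie⟩ := hmem
  constructor
  · calc sInf ((fun j => |x j|) '' Function.support x)
        ≤ |x j| := csInf_le hbdd ⟨j, hjx, rfl⟩
      _ = |x' j - x j| := by
          have : x' j = 0 := Function.notMem_support.mp hjx'
          rw [this, zero_sub, abs_neg]
      _ = |(x' - x) j| := by simp
      _ ≤ ‖x' - x‖ := abs_coord_le_norm _ _
  · rw [← hie]
    exact abs_pos.mpr hi
end
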